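/- Let φ be a homogeneous quasimorphism on Γ with defect D_φ. If a ∈ Γ is a product of k commutators, then |φ(a)| ≤ (2k−1)·D_φ. -/

import Mathlib

/-- If `φ` is a homogeneous quasimorphism with defect at most `D` and
`a` is a product of `k ≥ 1` commutators, then `|φ(a)| ≤ (2k−1)·D`. -/
theorem stmt_10 {Γ : Type*} [Group Γ] (φ : Γ → ℝ) (D : ℝ)
    (hD : ∀ a b : Γ, |φ (a * b) - φ a - φ b| ≤ D)
    (hhom : ∀ (a : Γ) (n : ℤ), φ (a ^ n) = n * φ a)
    (a : Γ) (k : ℕ) (hk : 1 ≤ k)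
    (ha : ∃ l : List Γ, l.length = k ∧ (∀ x ∈ l, ∃ y z : Γ, x = y * z * y⁻¹ * z⁻¹) ∧
      l.prod = a) :
    |φ a| ≤ (2 * (k : ℝ) - 1) * D := by
  obtain ⟨l, hlen, hcomm, hprod⟩ := ha
  have h1 : φ 1 = 0 := by simpa using hhom 1 0
  have hD0 : 0 ≤ D := by simpa [h1] using hD 1 1
  have hinv : ∀ g : Γ, φ g⁻¹ = -φ g := by
    intro g; simpa using hhom g (-1)
  -- conjugation invariance
  have hconj : ∀ g x : Γ, φ (g * x * g⁻¹) = φ x := by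
    intro g x
    have key : ∀ n : ℕ, (n : ℝ) * |φ (g * x * g⁻¹) - φ x| ≤ 2 * D := by
      intro n
      have hpow : (g * x * g⁻¹) ^ (n : ℤ) = g * x ^ (n : ℤ) * g⁻¹ := by
        simp [conj_zpow]
      have e1 : φ (g * x ^ (n : ℤ) * g⁻¹) = (n : ℝ) * φ (g * x * g⁻¹) := by
        rw [← hpow, hhom]; push_cast; ring
      have t1 := hD (g * x ^ (n : ℤ)) g⁻¹
      have t2 := hD g (x ^ (n : ℤ))
      have e2 : φ (x ^ (n : ℤ)) = (n : ℝ) * φ x := by rw [hhom]; push_cast; ring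
      rw [hinv g] at t1
      have habs : |(n : ℝ) * φ (g * x * g⁻¹) - (n : ℝ) * φ x| ≤ 2 * D := by
        rw [← e1, ← e2]
        have := abs_sub_abs_le_abs_sub (φ (g * x * g⁻¹ * (x ^ (n : ℤ))⁻¹)) 0
        calc |φ (g * x ^ (n:ℤ) * g⁻¹) - φ (x ^ (n:ℤ))|
            = |(φ (g * x ^ (n:ℤ) * g⁻¹) - φ (g * x ^ (n:ℤ)) - (-φ g))
              + (φ (g * x ^ (n:ℤ)) - φ g - φ (x ^ (n:ℤ)))| := by ring_nf
          _ ≤ |φ (g * x ^ (n:ℤ) * g⁻¹) - φ (g * x ^ (n:ℤ)) - (-φ g)|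
              + |φ (g * x ^ (n:ℤ)) - φ g - φ (x ^ (n:ℤ))| := abs_add_le _ _
          _ ≤ 2 * D := by linarith
      calc (n : ℝ) * |φ (g * x * g⁻¹) - φ x|
          = |(n : ℝ) * φ (g * x * g⁻¹) - (n : ℝ) * φ x| := by
            rw [← mul_sub, abs_mul, Nat.abs_cast]
        _ ≤ 2 * D := habs
    by_contra hne
    have hpos : 0 < |φ (g * x * g⁻¹) - φ x| := abs_pos.mpr (sub_ne_zero.mpr hne)
    obtain ⟨n, hn⟩ := exists_nat_gt ((2 * D) / |φ (g * x * g⁻¹) - φ x|)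
    have h2 := key n
    have h3 := (div_lt_iff₀ hpos).mp hn
    linarith
  -- each commutator has |φ| ≤ D
  have hcom : ∀ x ∈ l, |φ x| ≤ D := by
    intro x hx
    obtain ⟨y, z, rfl⟩ := hcomm x hx
    have h2 := hD (y * z * y⁻¹) z⁻¹
    rw [hconj y z, hinv z] at h2
    calc |φ (y * z * y⁻¹ * z⁻¹)|
        = |φ (y * z * y⁻¹ * z⁻¹) - φ z - (-φ z)| := by ring_nf
      _ ≤ D := h2
  -- induction on the list
  have main : ∀ (m : List Γ), m ≠ [] → (∀ x ∈ m, |φ x| ≤ D) →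
      |φ m.prod| ≤ (2 * (m.length : ℝ) - 1) * D := by
    intro m
    induction m with
    | nil => intro h; exact absurd rfl h
    | cons x t ih =>
      intro _ hb
      by_cases ht : t = []
      · subst ht
        have := hb x (by simp)
        simp only [List.prod_cons, List.prod_nil, mul_one, List.length_cons,
          List.length_nil]
        norm_num
        linarith
      · have h1 := ih ht (fun y hy => hb y (List.mem_cons_of_mem _ hy))
        have h2 := hD x t.prod
        have h3 := hb x List.mem_cons_self
        have habs : |φ (x * t.prod)| ≤ |φ x| + |φ t.prod| + D := by
          calc |φ (x * t.prod)|
              = |(φ (x * t.prod) - φ x - φ t.prod) + φ x + φ t.prod| := by ring_nf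
            _ ≤ |(φ (x * t.prod) - φ x - φ t.prod) + φ x| + |φ t.prod| := abs_add_le _ _
            _ ≤ |φ (x * t.prod) - φ x - φ t.prod| + |φ x| + |φ t.prod| := by
                have := abs_add_le (φ (x * t.prod) - φ x - φ t.prod) (φ x)
                linarith
            _ ≤ |φ x| + |φ t.prod| + D := by linarith
        have hL : (1 : ℝ) ≤ (t.length : ℝ) := by
          have : 1 ≤ t.length := List.length_pos_iff.mpr ht
          exact_mod_cast this
        simp only [List.prod_cons, List.length_cons]
        push_cast
        linarith
  have hne : l ≠ [] := by
    intro h; rw [h] at hlen; simp at hlen; omega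
  have := main l hne hcom
  rw [hprod, hlen] at this
  exact this
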